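/- For every $\ell\in\{1,\dots,m\}$ one has $\varphi'_\mathbf{i}(\partial_\mathbf{i}\varepsilon_\ell)=-\varepsilon_\ell-\sum_{k=1}^{\ell-1}(w_k^\vee\alpha_{i_k}^\vee,\ w_\ell\alpha_{i_\ell})\,\varepsilon_k$. -/

import Mathlib

open Finset

/-- The weight lattice `𝒫`: the free abelian group with basis `{αᵢ, ωᵢ : i ∈ I}`,
represented by pairs of coefficient vectors (first component: coefficients of the `αᵢ`,
second component: coefficients of the `ωᵢ`). -/
abbrev PLat (n : ℕ) := (Fin n → ℤ) × (Fin n → ℤ)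

/-- The coroot lattice `𝒬^∨`: the free abelian group with basis `{αᵢ^∨ : i ∈ I}`,
represented by coefficient vectors. -/
abbrev QvLat (n : ℕ) := Fin n → ℤ

variable {n : ℕ}

/-- The basis element `α_j^∨` of `𝒬^∨`. -/
def coroot (j : Fin n) : QvLat n := fun k => if k = j then 1 else 0

/-- The basis element `α_j` of `𝒫`. -/
def alP (j : Fin n) : PLat n := (fun k => if k = j then 1 else 0, 0)

/-- The basis element `ω_j` of `𝒫`. -/
def omP (j : Fin n) : PLat n := (0, fun k => if k = j then 1 else 0)

/-- The biadditive pairing `𝒬^∨ × 𝒫 → ℤ` with `(αᵢ^∨, α_j) = a_{ij}` and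
`(αᵢ^∨, ω_j) = δ_{ij}`. -/
def pairQP (A : Fin n → Fin n → ℤ) (x : QvLat n) (lam : PLat n) : ℤ :=
  (∑ a, ∑ b, x a * A a b * lam.1 b) + ∑ a, x a * lam.2 a

/-- The simple reflection `sᵢ` on `𝒫`: `sᵢ α_j = α_j - a_{ij} αᵢ`,
`sᵢ ω_j = ω_j - δ_{ij} αᵢ`. -/
def sP (A : Fin n → Fin n → ℤ) (a : Fin n) (lam : PLat n) : PLat n :=
  (fun j => if j = a then lam.1 a - ((∑ k, A a k * lam.1 k) + lam.2 a) else lam.1 j,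
   lam.2)

/-- The simple reflection `sᵢ^∨` on `𝒬^∨`: `sᵢ^∨ α_j^∨ = α_j^∨ - a_{ji} αᵢ^∨`. -/
def sQ (A : Fin n → Fin n → ℤ) (a : Fin n) (x : QvLat n) : QvLat n :=
  fun j => if j = a then x a - ∑ k, A k a * x k else x j

/-- `w_ℓ = s_{i₁} ∘ ⋯ ∘ s_{i_ℓ}` on `𝒫` (with `w₀ = id`). -/
def wP (A : Fin n → Fin n → ℤ) (ii : ℕ → Fin n) : ℕ → PLat n → PLat n
  | 0 => id
  | (l+1) => wP A ii l ∘ sP A (ii (l+1))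

/-- `w_ℓ^∨ = s_{i₁}^∨ ∘ ⋯ ∘ s_{i_ℓ}^∨` on `𝒬^∨` (with `w₀ = id`). -/
def wQ (A : Fin n → Fin n → ℤ) (ii : ℕ → Fin n) : ℕ → QvLat n → QvLat n
  | 0 => id
  | (l+1) => wQ A ii l ∘ sQ A (ii (l+1))

/-- `k⁺ = min({ℓ : k < ℓ ≤ m, i_ℓ = i_k} ∪ {m+1})`. -/
noncomputable def kplus (ii : ℕ → Fin n) (m k : ℕ) : ℕ :=
  sInf ({l | k < l ∧ l ≤ m ∧ ii l = ii k} ∪ {m+1})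

/-- `k⁻ = max({ℓ : 1 ≤ ℓ < k, i_ℓ = i_k} ∪ {0})`. -/
noncomputable def kminus (ii : ℕ → Fin n) (k : ℕ) : ℕ :=
  sSup ({l | 1 ≤ l ∧ l < k ∧ ii l = ii k} ∪ {0})

/-- The standard basis vector `ε_k` of `ℤ^m` (1-based index), with the convention
`ε_s = 0` for `s ∉ {1,…,m}`. -/
def eps (m k : ℕ) : Fin m → ℤ := fun j => if (j : ℕ) + 1 = k then 1 else 0

/-- `φ_𝐢(ε_k) = -ε_k - ε_{k⁻} - ∑_{ℓ : ℓ < k < ℓ⁺} a_{i_ℓ i_k} ε_ℓ`. -/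
noncomputable def phiE (A : Fin n → Fin n → ℤ) (ii : ℕ → Fin n) (m k : ℕ) :
    Fin m → ℤ :=
  -(eps m k) - eps m (kminus ii k)
    - ∑ l : Fin m, (if (l:ℕ)+1 < k ∧ k < kplus ii m ((l:ℕ)+1)
        then A (ii ((l:ℕ)+1)) (ii k) else 0) • eps m ((l:ℕ)+1)

/-- The endomorphism `φ_𝐢` of `ℤ^m`, extended additively from its values on the basis. -/
noncomputable def phiMap (A : Fin n → Fin n → ℤ) (ii : ℕ → Fin n) (m : ℕ)
    (v : Fin m → ℤ) : Fin m → ℤ :=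
  ∑ k : Fin m, v k • phiE A ii m ((k:ℕ)+1)

/-- `φ'_𝐢(ε_ℓ) = -∑_{k=1}^{ℓ} (w_k^∨ α_{i_k}^∨, w_ℓ ω_{i_ℓ}) ε_k`. -/
def phiE' (A : Fin n → Fin n → ℤ) (ii : ℕ → Fin n) (m l : ℕ) : Fin m → ℤ :=
  -∑ k : Fin m, (if (k:ℕ)+1 ≤ l then
      pairQP A (wQ A ii ((k:ℕ)+1) (coroot (ii ((k:ℕ)+1)))) (wP A ii l (omP (ii l)))
    else 0) • eps m ((k:ℕ)+1)

/-- The endomorphism `φ'_𝐢` of `ℤ^m`, extended additively from its values on the basis. -/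
def phiMap' (A : Fin n → Fin n → ℤ) (ii : ℕ → Fin n) (m : ℕ)
    (v : Fin m → ℤ) : Fin m → ℤ :=
  ∑ l : Fin m, v l • phiE' A ii m ((l:ℕ)+1)

/-- `∂_𝐢 ε_k = ε_k - ε_{k⁻}`. -/
noncomputable def derE (ii : ℕ → Fin n) (m k : ℕ) : Fin m → ℤ :=
  eps m k - eps m (kminus ii k)

/-- The endomorphism `∂_𝐢` of `ℤ^m`. -/
noncomputable def derMap (ii : ℕ → Fin n) (m : ℕ) (v : Fin m → ℤ) : Fin m → ℤ :=
  ∑ k : Fin m, v k • derE ii m ((k:ℕ)+1)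

/-- `∫_𝐢 ε_k = ε_k + ε_{k⁻} + ε_{(k⁻)⁻} + ⋯` (summing along the chain `k > k⁻ > ⋯ > 0`). -/
noncomputable def intE (ii : ℕ → Fin n) (m : ℕ) (k : ℕ) : Fin m → ℤ :=
  if h : kminus ii k < k then eps m k + intE ii m (kminus ii k) else eps m k
termination_by k
decreasing_by exact h

/-- The endomorphism `∫_𝐢` of `ℤ^m`. -/
noncomputable def intMap (ii : ℕ → Fin n) (m : ℕ) (v : Fin m → ℤ) : Fin m → ℤ :=
  ∑ k : Fin m, v k • intE ii m ((k:ℕ)+1)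

/-- The skew-symmetric biadditive form `Λ_𝐢` on `ℤ^m` with
`Λ_𝐢(ε_k, ε_ℓ) = sgn(k-ℓ) c_{i_k i_ℓ}` where `c_{ij} = dᵢ a_{ij}`. -/
def LamF (A : Fin n → Fin n → ℤ) (d : Fin n → ℤ) (ii : ℕ → Fin n) (m : ℕ)
    (a b : Fin m → ℤ) : ℤ :=
  ∑ k : Fin m, ∑ l : Fin m, a k * b l *
    ((((k:ℕ):ℤ) - ((l:ℕ):ℤ)).sign *
      (d (ii ((k:ℕ)+1)) * A (ii ((k:ℕ)+1)) (ii ((l:ℕ)+1))))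

/-- The biadditive form `Φ_𝐢` on `ℤ^m` with `Φ_𝐢(ε_k,ε_ℓ) = -d_{i_k}` if `k = ℓ`,
`= -c_{i_ℓ i_k}` if `ℓ < k`, and `= 0` if `ℓ > k`. -/
def PhiF (A : Fin n → Fin n → ℤ) (d : Fin n → ℤ) (ii : ℕ → Fin n) (m : ℕ)
    (a b : Fin m → ℤ) : ℤ :=
  ∑ k : Fin m, ∑ l : Fin m, a k * b l *
    (if (k:ℕ) = (l:ℕ) then -(d (ii ((k:ℕ)+1)))
     else if (l:ℕ) < (k:ℕ) then
       -(d (ii ((l:ℕ)+1)) * A (ii ((l:ℕ)+1)) (ii ((k:ℕ)+1)))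
     else 0)

/-- The entry `b_{pk}` of the exchange matrix `B̃_𝐢`. -/
noncomputable def bcoef (A : Fin n → Fin n → ℤ) (ii : ℕ → Fin n) (m p k : ℕ) : ℤ :=
  if p = kminus ii k then -1
  else if p < k ∧ k < kplus ii m p ∧ kplus ii m p < kplus ii m k then
    -(A (ii p) (ii k))
  else if k < p ∧ p < kplus ii m k ∧ kplus ii m k < kplus ii m p then
    A (ii p) (ii k)
  else if p = kplus ii m k then 1
  else 0

/-- The column `𝐛^k = ∑_p b_{pk} ε_p ∈ ℤ^m` of the exchange matrix. -/
noncomputable def bvec (A : Fin n → Fin n → ℤ) (ii : ℕ → Fin n) (m k : ℕ) :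
    Fin m → ℤ :=
  fun p => bcoef A ii m ((p:ℕ)+1) k

/-- `ρ_𝐢⁺(ε_k) = ε_k + ∑_{ℓ<k, ℓ⁺=m+1} a_{i_ℓ i_k} ε_ℓ`. -/
noncomputable def rhoPE (A : Fin n → Fin n → ℤ) (ii : ℕ → Fin n) (m k : ℕ) :
    Fin m → ℤ :=
  eps m k + ∑ l : Fin m, (if (l:ℕ)+1 < k ∧ kplus ii m ((l:ℕ)+1) = m+1
      then A (ii ((l:ℕ)+1)) (ii k) else 0) • eps m ((l:ℕ)+1)

/-- `ρ_𝐢⁻(ε_k) = ε_k - ∑_{ℓ≤k, ℓ⁺=m+1} a_{i_ℓ i_k} ε_ℓ`. -/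
noncomputable def rhoME (A : Fin n → Fin n → ℤ) (ii : ℕ → Fin n) (m k : ℕ) :
    Fin m → ℤ :=
  eps m k - ∑ l : Fin m, (if (l:ℕ)+1 ≤ k ∧ kplus ii m ((l:ℕ)+1) = m+1
      then A (ii ((l:ℕ)+1)) (ii k) else 0) • eps m ((l:ℕ)+1)

/-- The endomorphism `ρ_𝐢⁺` of `ℤ^m`. -/
noncomputable def rhoPMap (A : Fin n → Fin n → ℤ) (ii : ℕ → Fin n) (m : ℕ)
    (v : Fin m → ℤ) : Fin m → ℤ :=
  ∑ k : Fin m, v k • rhoPE A ii m ((k:ℕ)+1)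

/-- The endomorphism `ρ_𝐢⁻` of `ℤ^m`. -/
noncomputable def rhoMMap (A : Fin n → Fin n → ℤ) (ii : ℕ → Fin n) (m : ℕ)
    (v : Fin m → ℤ) : Fin m → ℤ :=
  ∑ k : Fin m, v k • rhoME A ii m ((k:ℕ)+1)

/-- `𝐚_λ = -∑_{k=1}^m (w_k^∨ α_{i_k}^∨, w_m λ) ε_k ∈ ℤ^m`. -/
def avec (A : Fin n → Fin n → ℤ) (ii : ℕ → Fin n) (m : ℕ) (lam : PLat n) :
    Fin m → ℤ :=
  fun k => -(pairQP A (wQ A ii ((k:ℕ)+1) (coroot (ii ((k:ℕ)+1)))) (wP A ii m lam))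

/-- `|𝐚| = ∑_{k=1}^m a_k α_{i_k} ∈ 𝒬 ⊆ 𝒫`. -/
def degP (ii : ℕ → Fin n) (m : ℕ) (a : Fin m → ℤ) : PLat n :=
  (fun j => ∑ k : Fin m, if ii ((k:ℕ)+1) = j then a k else 0, 0)

/-- The pairing `(μ, λ) = ∑ mᵢ dᵢ (αᵢ^∨, λ)` for `μ = ∑ mᵢ αᵢ ∈ 𝒬` and `λ ∈ 𝒫`
(induced by identifying `αᵢ` with `dᵢ αᵢ^∨`). -/
def pairAl (A : Fin n → Fin n → ℤ) (d : Fin n → ℤ) (mu lam : PLat n) : ℤ :=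
  ∑ j, mu.1 j * (d j * pairQP A (coroot j) lam)


section Aux

variable {n : ℕ}

lemma pairQP_coroot (A : Fin n → Fin n → ℤ) (i : Fin n) (lam : PLat n) :
    pairQP A (coroot i) lam = (∑ b, A i b * lam.1 b) + lam.2 i := by
  rw [pairQP, Finset.sum_comm]
  simp [coroot, ite_mul, zero_mul, one_mul, Finset.sum_ite_eq']

lemma pairQP_coroot_omP (A : Fin n → Fin n → ℤ) (i j : Fin n) :
    pairQP A (coroot i) (omP j) = if i = j then 1 else 0 := by
  simp [pairQP_coroot, omP]

lemma pairQP_sub_right (A : Fin n → Fin n → ℤ) (x : QvLat n) (lam mu : PLat n) :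
    pairQP A x (lam - mu) = pairQP A x lam - pairQP A x mu := by
  simp [pairQP, mul_sub, Finset.sum_sub_distrib]
  ring

lemma sP_fst (A : Fin n → Fin n → ℤ) (a : Fin n) (lam : PLat n) :
    (sP A a lam).1 = fun j => lam.1 j -
      (if j = a then (∑ k, A a k * lam.1 k) + lam.2 a else 0) := by
  funext j
  simp only [sP]
  split <;> simp_all

lemma sQ_eq (A : Fin n → Fin n → ℤ) (a : Fin n) (x : QvLat n) :
    sQ A a x = fun j => x j - (if j = a then ∑ k, A k a * x k else 0) := by
  funext j
  simp only [sQ]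
  split <;> simp_all

lemma pairQP_sQ_sP (A : Fin n → Fin n → ℤ) (a : Fin n) (ha : A a a = 2)
    (x : QvLat n) (lam : PLat n) :
    pairQP A (sQ A a x) (sP A a lam) = pairQP A x lam := by
  have h2 : (sP A a lam).2 = lam.2 := rfl
  rw [pairQP, sQ_eq, sP_fst, h2]
  simp only [sub_mul, mul_sub, ite_mul, mul_ite, zero_mul, mul_zero,
    Finset.sum_sub_distrib, Finset.sum_ite_eq', Finset.mem_univ, if_true]
  rw [pairQP]
  have hT : ∑ j : Fin n, x j * A j a * ((∑ k, A a k * lam.1 k) + lam.2 a)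
      = (∑ k, A k a * x k) * ((∑ k, A a k * lam.1 k) + lam.2 a) := by
    rw [Finset.sum_mul]
    exact Finset.sum_congr rfl fun j _ => by ring
  have hS : (∑ j : Fin n, ∑ b : Fin n,
        if j = a then (∑ k, A k a * x k) * A j b * lam.1 b else 0)
      = (∑ k, A k a * x k) * (∑ k, A a k * lam.1 k) := by
    rw [Finset.sum_comm]
    simp only [Finset.sum_ite_eq', Finset.mem_univ, if_true]
    rw [Finset.mul_sum]
    exact Finset.sum_congr rfl fun b _ => by ring
  rw [hT, hS, ha]
  ring

lemma pairQP_wQ_wP (A : Fin n → Fin n → ℤ) (hA : ∀ i, A i i = 2) (ii : ℕ → Fin n) :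
    ∀ (l : ℕ) (x : QvLat n) (lam : PLat n),
      pairQP A (wQ A ii l x) (wP A ii l lam) = pairQP A x lam
  | 0, x, lam => rfl
  | (l+1), x, lam => by
      rw [wQ, wP, Function.comp_apply, Function.comp_apply,
        pairQP_wQ_wP A hA ii l, pairQP_sQ_sP A _ (hA _)]

lemma sP_sub (A : Fin n → Fin n → ℤ) (a : Fin n) (lam mu : PLat n) :
    sP A a (lam - mu) = sP A a lam - sP A a mu := by
  refine Prod.ext ?_ rfl
  funext j
  show (sP A a (lam - mu)).1 j = (sP A a lam).1 j - (sP A a mu).1 j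
  simp only [sP, Prod.fst_sub, Prod.snd_sub, Pi.sub_apply]
  split
  · simp [mul_sub, Finset.sum_sub_distrib]
    ring
  · rfl

lemma wP_sub (A : Fin n → Fin n → ℤ) (ii : ℕ → Fin n) :
    ∀ (l : ℕ) (lam mu : PLat n),
      wP A ii l (lam - mu) = wP A ii l lam - wP A ii l mu
  | 0, lam, mu => rfl
  | (l+1), lam, mu => by
      rw [wP, Function.comp_apply, Function.comp_apply, Function.comp_apply,
        sP_sub, wP_sub A ii l]

lemma sP_omP_ne (A : Fin n → Fin n → ℤ) {a j : Fin n} (h : a ≠ j) :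
    sP A a (omP j) = omP j := by
  refine Prod.ext ?_ rfl
  funext j'
  simp only [sP, omP]
  split <;> simp_all

lemma sP_omP_self (A : Fin n → Fin n → ℤ) (a : Fin n) :
    sP A a (omP a) = omP a - alP a := by
  refine Prod.ext ?_ ?_
  · funext j'
    show (sP A a (omP a)).1 j' = (omP a).1 j' - (alP a).1 j'
    simp only [sP, omP, alP]
    split <;> simp_all
  · show (omP a).2 = (omP a).2 - (alP a).2
    simp [alP]

lemma sP_alP_self (A : Fin n → Fin n → ℤ) (a : Fin n) (ha : A a a = 2) :
    sP A a (alP a) = -(alP a) := by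
  refine Prod.ext ?_ rfl
  funext j'
  show (sP A a (alP a)).1 j' = -((alP a).1 j')
  simp only [sP, alP, mul_ite, mul_one, mul_zero, Finset.sum_ite_eq',
    Finset.mem_univ, if_true]
  split <;> simp_all

lemma sP_zero (A : Fin n → Fin n → ℤ) (a : Fin n) : sP A a 0 = 0 := by
  refine Prod.ext ?_ rfl
  funext j
  show (sP A a 0).1 j = 0
  simp [sP]

lemma wP_zero (A : Fin n → Fin n → ℤ) (ii : ℕ → Fin n) :
    ∀ l : ℕ, wP A ii l 0 = 0
  | 0 => rfl
  | (l+1) => by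
      rw [wP, Function.comp_apply, sP_zero, wP_zero A ii l]

lemma wP_neg (A : Fin n → Fin n → ℤ) (ii : ℕ → Fin n) (l : ℕ) (lam : PLat n) :
    wP A ii l (-lam) = -(wP A ii l lam) := by
  have := wP_sub A ii l 0 lam
  simpa [wP_zero] using this

/-- The partial word `s_{i_{k+1}} ⋯ s_{i_l}` on `𝒫`. -/
def tP (A : Fin n → Fin n → ℤ) (ii : ℕ → Fin n) (k : ℕ) : ℕ → PLat n → PLat n
  | 0 => id
  | (l+1) => if l+1 ≤ k then id else tP A ii k l ∘ sP A (ii (l+1))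

lemma tP_self (A : Fin n → Fin n → ℤ) (ii : ℕ → Fin n) (k : ℕ) :
    tP A ii k k = id := by
  cases k with
  | zero => rfl
  | succ j => simp [tP]

lemma wP_tP (A : Fin n → Fin n → ℤ) (ii : ℕ → Fin n) (k : ℕ) :
    ∀ l, k ≤ l → ∀ lam, wP A ii l lam = wP A ii k (tP A ii k l lam)
  | 0, h, lam => by
      have : k = 0 := Nat.le_zero.mp h
      subst this; rfl
  | (l+1), h, lam => by
      rcases Nat.lt_or_ge k (l+1) with h' | h'
      · have hk : k ≤ l := Nat.lt_succ_iff.mp h'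
        rw [wP, Function.comp_apply, wP_tP A ii k l hk]
        have : tP A ii k (l+1) lam = tP A ii k l (sP A (ii (l+1)) lam) := by
          rw [tP, if_neg (by omega), Function.comp_apply]
        rw [this]
      · have : k = l+1 := le_antisymm h h'
        subst this
        rw [tP_self]
        rfl

lemma tP_omP (A : Fin n → Fin n → ℤ) (ii : ℕ → Fin n) (k : ℕ) (j : Fin n) :
    ∀ l, (∀ t, k < t → t ≤ l → ii t ≠ j) → tP A ii k l (omP j) = omP j
  | 0, _ => rfl
  | (l+1), h => by
      rcases Nat.lt_or_ge k (l+1) with h' | h'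
      · rw [tP, if_neg (by omega), Function.comp_apply,
          sP_omP_ne A (h (l+1) h' le_rfl),
          tP_omP A ii k j l (fun t ht1 ht2 => h t ht1 (by omega))]
      · rw [tP, if_pos h']
        rfl

lemma eps_zero (m : ℕ) : eps m 0 = 0 := by
  funext j
  simp [eps]

lemma sum_eps_smul {m : ℕ} (l : ℕ) (hl1 : 1 ≤ l) (hl2 : l ≤ m) (f : ℕ → Fin m → ℤ) :
    ∑ k : Fin m, (eps m l) k • f ((k:ℕ)+1) = f l := by
  have hml : l - 1 < m := by omega
  have key : ∀ k : Fin m, (eps m l) k • f ((k:ℕ)+1)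
      = if k = (⟨l-1, hml⟩ : Fin m) then f l else 0 := by
    intro k
    by_cases h : (k:ℕ)+1 = l
    · have hk : k = (⟨l-1, hml⟩ : Fin m) := Fin.ext (show (k:ℕ) = l-1 by omega)
      rw [if_pos hk, eps]
      simp [h]
    · have hk : k ≠ (⟨l-1, hml⟩ : Fin m) := by
        intro he
        apply h
        have : (k:ℕ) = l - 1 := by rw [he]
        omega
      rw [if_neg hk, eps]
      simp [h]
  rw [Finset.sum_congr rfl (fun k _ => key k), Finset.sum_ite_eq']
  simp

section Kminus

variable (ii : ℕ → Fin n) (l : ℕ)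

lemma kminus_bdd : BddAbove ({l' | 1 ≤ l' ∧ l' < l ∧ ii l' = ii l} ∪ {0}) := by
  refine ⟨l, fun x hx => ?_⟩
  rcases hx with hx | hx
  · exact le_of_lt hx.2.1
  · simp at hx; omega

lemma kminus_mem :
    kminus ii l ∈ ({l' | 1 ≤ l' ∧ l' < l ∧ ii l' = ii l} ∪ {0}) :=
  Nat.sSup_mem ⟨0, Or.inr rfl⟩ (kminus_bdd ii l)

lemma kminus_lt (hl : 1 ≤ l) : kminus ii l < l := by
  rcases kminus_mem ii l with h | h
  · exact h.2.1
  · simp at h; omega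

lemma kminus_spec (hp : 1 ≤ kminus ii l) :
    kminus ii l < l ∧ ii (kminus ii l) = ii l := by
  rcases kminus_mem ii l with h | h
  · exact ⟨h.2.1, h.2.2⟩
  · simp at h; omega

lemma kminus_max {t : ℕ} (ht1 : kminus ii l < t) (ht2 : t < l) : ii t ≠ ii l := by
  intro he
  have : t ∈ ({l' | 1 ≤ l' ∧ l' < l ∧ ii l' = ii l} ∪ {0}) :=
    Or.inl ⟨by omega, ht2, he⟩
  have hle := le_csSup (kminus_bdd ii l) this
  unfold kminus at ht1
  omega

end Kminus

end Aux

/-- `φ'_𝐢(∂_𝐢 ε_ℓ) = -ε_ℓ - ∑_{k=1}^{ℓ-1} (w_k^∨ α_{i_k}^∨, w_ℓ α_{i_ℓ}) ε_k`. -/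
theorem phi'_der_eps {n m : ℕ} (hm : 1 ≤ m)
    (A : Fin n → Fin n → ℤ) (d : Fin n → ℤ)
    (hA : ∀ i, A i i = 2) (hd : ∀ i, 0 < d i)
    (hsym : ∀ i j, d i * A i j = d j * A j i)
    (ii : ℕ → Fin n) (l : ℕ) (hl1 : 1 ≤ l) (hl2 : l ≤ m) :
    phiMap' A ii m (derMap ii m (eps m l)) =
      -(eps m l) - ∑ k : Fin m,
        (if (k:ℕ)+1 < l then
          pairQP A (wQ A ii ((k:ℕ)+1) (coroot (ii ((k:ℕ)+1)))) (wP A ii l (alP (ii l)))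
        else 0) • eps m ((k:ℕ)+1) := by
  obtain ⟨l', rfl⟩ : ∃ l', l = l' + 1 := ⟨l - 1, by omega⟩
  have hplt : kminus ii (l'+1) < l'+1 := kminus_lt ii (l'+1) hl1
  have hplm : kminus ii (l'+1) ≤ m := by omega
  have hder : derMap ii m (eps m (l'+1))
      = eps m (l'+1) - eps m (kminus ii (l'+1)) := by
    rw [derMap, sum_eps_smul (l'+1) hl1 hl2 (derE ii m), derE]
  have hphi' : ∀ v w : Fin m → ℤ,
      phiMap' A ii m (v - w) = phiMap' A ii m v - phiMap' A ii m w := by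
    intro v w
    simp [phiMap', sub_smul, Finset.sum_sub_distrib]
  have h1 : phiMap' A ii m (eps m (l'+1)) = phiE' A ii m (l'+1) := by
    rw [phiMap']
    exact sum_eps_smul (l'+1) hl1 hl2 _
  have h2 : phiMap' A ii m (eps m (kminus ii (l'+1)))
      = phiE' A ii m (kminus ii (l'+1)) := by
    rcases Nat.eq_zero_or_pos (kminus ii (l'+1)) with h0 | h1p
    · rw [h0, eps_zero]
      simp [phiMap', phiE', Nat.le_zero]
    · rw [phiMap']
      exact sum_eps_smul _ h1p hplm _
  rw [hder, hphi', h1, h2]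
  -- key vector identities
  have hwl_om : wP A ii (l'+1) (omP (ii (l'+1)))
      = wP A ii l' (omP (ii (l'+1))) - wP A ii l' (alP (ii (l'+1))) := by
    rw [wP, Function.comp_apply, sP_omP_self, wP_sub]
  have hwl_al : wP A ii (l'+1) (alP (ii (l'+1)))
      = -(wP A ii l' (alP (ii (l'+1)))) := by
    rw [wP, Function.comp_apply, sP_alP_self A _ (hA _), wP_neg]
  -- the coefficient-wise identity, summed
  have hC : (∑ k : Fin m, (if (k:ℕ)+1 ≤ l'+1 then
        pairQP A (wQ A ii ((k:ℕ)+1) (coroot (ii ((k:ℕ)+1))))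
          (wP A ii (l'+1) (omP (ii (l'+1)))) else 0) • eps m ((k:ℕ)+1))
      = (∑ k : Fin m, (if (k:ℕ)+1 ≤ kminus ii (l'+1) then
            pairQP A (wQ A ii ((k:ℕ)+1) (coroot (ii ((k:ℕ)+1))))
              (wP A ii (kminus ii (l'+1)) (omP (ii (kminus ii (l'+1))))) else 0)
            • eps m ((k:ℕ)+1))
        + eps m (l'+1)
        + ∑ k : Fin m, (if (k:ℕ)+1 < l'+1 then
            pairQP A (wQ A ii ((k:ℕ)+1) (coroot (ii ((k:ℕ)+1))))
              (wP A ii (l'+1) (alP (ii (l'+1)))) else 0) • eps m ((k:ℕ)+1) := by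
    rw [← sum_eps_smul (l'+1) hl1 hl2 (eps m), ← Finset.sum_add_distrib,
      ← Finset.sum_add_distrib]
    refine Finset.sum_congr rfl fun k _ => ?_
    rw [← add_smul, ← add_smul]
    congr 1
    by_cases hkl : (k:ℕ)+1 = l'+1
    · rw [if_pos (le_of_eq hkl), if_neg (by omega), if_neg (by omega), hkl,
        pairQP_wQ_wP A hA, pairQP_coroot_omP, if_pos rfl]
      simp [eps, hkl]
    · by_cases hkl2 : (k:ℕ)+1 < l'+1
      · have heps0 : eps m (l'+1) k = 0 := by simp [eps, show (k:ℕ) ≠ l' by omega]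
        by_cases hkp : (k:ℕ)+1 ≤ kminus ii (l'+1)
        · have hp1 : 1 ≤ kminus ii (l'+1) := le_trans (by omega) hkp
          have hip : ii (kminus ii (l'+1)) = ii (l'+1) :=
            (kminus_spec ii (l'+1) hp1).2
          rw [if_pos (by omega), if_pos hkp, if_pos hkl2, heps0]
          have hom : wP A ii l' (omP (ii (l'+1)))
              = wP A ii (kminus ii (l'+1)) (omP (ii (l'+1))) := by
            rw [wP_tP A ii (kminus ii (l'+1)) l' (by omega),
              tP_omP A ii (kminus ii (l'+1)) _ l'
                (fun t ht1 ht2 => kminus_max ii (l'+1) ht1 (by omega))]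
          have hvec : wP A ii (l'+1) (omP (ii (l'+1)))
              - wP A ii (kminus ii (l'+1)) (omP (ii (kminus ii (l'+1))))
              = wP A ii (l'+1) (alP (ii (l'+1))) := by
            rw [hwl_om, hwl_al, hip, hom]
            abel
          have hps := pairQP_sub_right A
            (wQ A ii ((k:ℕ)+1) (coroot (ii ((k:ℕ)+1))))
            (wP A ii (l'+1) (omP (ii (l'+1))))
            (wP A ii (kminus ii (l'+1)) (omP (ii (kminus ii (l'+1)))))
          rw [hvec] at hps
          linarith [hps]
        · rw [if_pos (by omega), if_neg hkp, if_pos hkl2, heps0]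
          have hs : sP A (ii (l'+1)) (omP (ii (l'+1)) - alP (ii (l'+1)))
              = omP (ii (l'+1)) := by
            rw [sP_sub, sP_omP_self, sP_alP_self A _ (hA _)]
            abel
          have hne : ii ((k:ℕ)+1) ≠ ii (l'+1) :=
            kminus_max ii (l'+1) (by omega) (by omega)
          have hvec : wP A ii (l'+1) (omP (ii (l'+1)))
              - wP A ii (l'+1) (alP (ii (l'+1)))
              = wP A ii ((k:ℕ)+1) (omP (ii (l'+1))) := by
            rw [← wP_sub, wP, Function.comp_apply, hs,
              wP_tP A ii ((k:ℕ)+1) l' (by omega),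
              tP_omP A ii ((k:ℕ)+1) _ l'
                (fun t ht1 ht2 => kminus_max ii (l'+1) (by omega) (by omega))]
          have hps := pairQP_sub_right A
            (wQ A ii ((k:ℕ)+1) (coroot (ii ((k:ℕ)+1))))
            (wP A ii (l'+1) (omP (ii (l'+1))))
            (wP A ii (l'+1) (alP (ii (l'+1))))
          rw [hvec, pairQP_wQ_wP A hA, pairQP_coroot_omP, if_neg hne] at hps
          linarith [hps]
      · rw [if_neg (by omega), if_neg (by omega), if_neg (by omega)]
        simp [eps, show (k:ℕ) ≠ l' by omega]
  rw [phiE', phiE', hC]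
  abel
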